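/- (Markovian transition for the recursive quantization scheme in the Vlasov setting.) Suppose b(t,x,μ) = ∫β(t,x,u)μ(du) and σ(t,x,μ) = ∫a(t,x,u)μ(du). Let x^{(m)} be quantizers with distinct components and p^{(m)}_k = P(X̂_{t_m} = x^{(m)}_k). Then the weights at step m+1 of the quantization-based Euler scheme satisfy: p^{(m+1)}_j = Σ_{i=1}^{K} P( E_i ∈ V_j(x^{(m+1)}) ) · p^{(m)}_i, where E_i = x^{(m)}_i + h·Σ_k p^{(m)}_k β(t_m, x^{(m)}_i, x^{(m)}_k) + √h·(Σ_k p^{(m)}_k a(t_m, x^{(m)}_i, x^{(m)}_k))·Z_{m+1} and Z_{m+1} ~ N(0, I_q) is independent of X̂_{t_m}. Equivalently, the sequence (X̂_{t_m}) is a Markov chain on the quantizer points with transition probabilities given by Gaussian measures of Voronoi cells. -/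

import Mathlib

open MeasureTheory ProbabilityTheory
open scoped ENNReal NNReal


lemma aux_indep {Ω ι E : Type*} [m0 : MeasurableSpace Ω] [mE : MeasurableSpace E]
    (P : Measure Ω) [IsProbabilityMeasure P]
    (X : Ω → E) (hX : Measurable X)
    (f : ι → Ω → ℝ) (hf : ∀ i, Measurable (f i))
    (hindep : iIndep (fun i => MeasurableSpace.comap (f i) inferInstance) P)
    (hXf : IndepFun X (fun ω i => f i ω) P)
    (S T : Set ι) (hST : Disjoint S T) :
    Indep (⨆ i ∈ S, MeasurableSpace.comap (f i) inferInstance)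
      (MeasurableSpace.comap X mE ⊔ ⨆ i ∈ T, MeasurableSpace.comap (f i) inferInstance) P := by
  set G1 : MeasurableSpace Ω := ⨆ i ∈ S, MeasurableSpace.comap (f i) inferInstance with hG1
  set GT : MeasurableSpace Ω := ⨆ i ∈ T, MeasurableSpace.comap (f i) inferInstance with hGT
  set mX : MeasurableSpace Ω := MeasurableSpace.comap X mE with hmX
  have hcomapF : ∀ i, MeasurableSpace.comap (f i) inferInstance ≤
      MeasurableSpace.comap (fun ω i => f i ω) MeasurableSpace.pi := by
    intro i
    have h1 : f i = (fun g : ι → ℝ => g i) ∘ (fun ω i => f i ω) := rfl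
    calc MeasurableSpace.comap (f i) inferInstance
        = MeasurableSpace.comap (fun ω i => f i ω)
            (MeasurableSpace.comap (fun g : ι → ℝ => g i) inferInstance) := by
          rw [MeasurableSpace.comap_comp]; rfl
      _ ≤ MeasurableSpace.comap (fun ω i => f i ω) MeasurableSpace.pi :=
          MeasurableSpace.comap_mono (measurable_pi_apply i).comap_le
  have hG1le : G1 ≤ m0 := iSup₂_le fun i _ => (hf i).comap_le
  have hGTle : GT ≤ m0 := iSup₂_le fun i _ => (hf i).comap_le
  have hG1F : G1 ≤ MeasurableSpace.comap (fun ω i => f i ω) MeasurableSpace.pi :=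
    iSup₂_le fun i _ => hcomapF i
  have hGTF : GT ≤ MeasurableSpace.comap (fun ω i => f i ω) MeasurableSpace.pi :=
    iSup₂_le fun i _ => hcomapF i
  have hXF : Indep mX (MeasurableSpace.comap (fun ω i => f i ω) MeasurableSpace.pi) P := hXf
  have hXF' := (Indep_iff _ _ _).1 hXF
  have hG1T := (Indep_iff _ _ _).1
    (indep_iSup_of_disjoint (fun i => (hf i).comap_le) hindep hST : Indep G1 GT P)
  refine IndepSets.indep hG1le (sup_le hX.comap_le hGTle) ?_ ?_ ?_ ?_ ?_
    (p1 := {s | MeasurableSet[G1] s})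
    (p2 := {s | ∃ A B, MeasurableSet[mX] A ∧ MeasurableSet[GT] B ∧ s = A ∩ B})
  · exact fun s hs t ht _ => @MeasurableSet.inter _ G1 _ _ hs ht
  · rintro s ⟨A, B, hA, hB, rfl⟩ t ⟨A', B', hA', hB', rfl⟩ _
    exact ⟨A ∩ A', B ∩ B', hA.inter hA', hB.inter hB', by
      rw [Set.inter_inter_inter_comm]⟩
  · exact (@MeasurableSpace.generateFrom_measurableSet _ G1).symm
  · refine le_antisymm ?_ ?_
    · refine sup_le (fun s hs => ?_) (fun s hs => ?_)
      · exact MeasurableSpace.measurableSet_generateFrom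
          ⟨s, Set.univ, hs, MeasurableSet.univ, (Set.inter_univ s).symm⟩
      · exact MeasurableSpace.measurableSet_generateFrom
          ⟨Set.univ, s, MeasurableSet.univ, hs, (Set.univ_inter s).symm⟩
    · refine MeasurableSpace.generateFrom_le ?_
      rintro s ⟨A, B, hA, hB, rfl⟩
      exact @MeasurableSet.inter _ (mX ⊔ GT) _ _ ((le_sup_left : mX ≤ mX ⊔ GT) _ hA) ((le_sup_right : GT ≤ mX ⊔ GT) _ hB)
  · rw [IndepSets_iff]
    rintro s t hs ⟨A, B, hA, hB, rfl⟩
    have hsB : MeasurableSet[MeasurableSpace.comap (fun ω i => f i ω) MeasurableSpace.pi]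
        (s ∩ B) := MeasurableSet.inter (hG1F _ hs) (hGTF _ hB)
    calc P (s ∩ (A ∩ B)) = P (A ∩ (s ∩ B)) := by rw [Set.inter_left_comm]
      _ = P A * P (s ∩ B) := hXF' A (s ∩ B) hA hsB
      _ = P A * (P s * P B) := by rw [hG1T s B hs hB]
      _ = P s * (P A * P B) := by ring
      _ = P s * P (A ∩ B) := by rw [hXF' A B hA (hGTF _ hB)]


lemma meas_pi_helper {Ω' : Type*} (mΩ : MeasurableSpace Ω') {q : ℕ}
    {Y : Ω' → EuclideanSpace ℝ (Fin q)} (hY : ∀ i, Measurable[mΩ] fun ω => Y ω i) :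
    Measurable[mΩ] Y := (WithLp.measurable_toLp 2 _).comp (measurable_pi_iff.mpr hY)

lemma meas_comp_helper {Ω' : Type*} (mΩ : MeasurableSpace Ω') {E₁ E₂ : Type*}
    [MeasurableSpace E₁] [MeasurableSpace E₂] {p : E₁ → E₂} {w : Ω' → E₁}
    (hp : Measurable p) (hw : Measurable[mΩ] w) : Measurable[mΩ] fun ω => p (w ω) :=
  hp.comp hw

lemma meas_affine_helper {Ω' : Type*} (mΩ : MeasurableSpace Ω') {q d : ℕ}
    (c : EuclideanSpace ℝ (Fin d)) (r : ℝ)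
    (L : EuclideanSpace ℝ (Fin q) →L[ℝ] EuclideanSpace ℝ (Fin d))
    {Y : Ω' → EuclideanSpace ℝ (Fin q)} (hY : Measurable[mΩ] Y) :
    Measurable[mΩ] fun ω => c + r • L (Y ω) :=
  measurable_const.add ((L.continuous.measurable.comp hY).const_smul r)

open Classical in
lemma meas_sum_ite_helper {Ω' : Type*} (mΩ : MeasurableSpace Ω') {d K : ℕ}
    {w : Ω' → EuclideanSpace ℝ (Fin d)} (hw : Measurable[mΩ] w)
    (v : Fin K → EuclideanSpace ℝ (Fin d))
    (G : Fin K → Ω' → EuclideanSpace ℝ (Fin d)) (hG : ∀ i, Measurable[mΩ] (G i)) :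
    Measurable[mΩ] fun ω => ∑ i, if w ω = v i then G i ω else 0 := by
  refine Finset.measurable_sum _ fun i _ => Measurable.ite ?_ (hG i) measurable_const
  exact hw (measurableSet_singleton (v i))


/-- Markovian transition for the recursive quantization scheme in the Vlasov setting:
the weights satisfy `p^{(m+1)}_j = ∑_i P(E_i ∈ V_j(x^{(m+1)})) p^{(m)}_i`, where
`E_i = x^{(m)}_i + h ∑_k p^{(m)}_k β(t_m, x^{(m)}_i, x^{(m)}_k)
      + √h (∑_k p^{(m)}_k a(t_m, x^{(m)}_i, x^{(m)}_k)) Z_{m+1}`. -/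
theorem recursive_quantization_transition {Ω : Type*} [m0 : MeasurableSpace Ω]
    (P : Measure Ω) [IsProbabilityMeasure P] {d q : ℕ} (M K : ℕ) (hM : 0 < M) (hK : 0 < K)
    (T h : ℝ) (hT : 0 < T) (hh : h = T / M)
    -- Vlasov coefficients:
    (β : ℝ → EuclideanSpace ℝ (Fin d) → EuclideanSpace ℝ (Fin d) → EuclideanSpace ℝ (Fin d))
    (a : ℝ → EuclideanSpace ℝ (Fin d) → EuclideanSpace ℝ (Fin d) →
      (EuclideanSpace ℝ (Fin q) →L[ℝ] EuclideanSpace ℝ (Fin d)))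
    -- initial random variable:
    (X₀ : Ω → EuclideanSpace ℝ (Fin d)) (hX₀meas : Measurable X₀)
    -- i.i.d. standard Gaussian innovations `Z_{m+1}`, independent of `X₀`:
    (Z : ℕ → Ω → EuclideanSpace ℝ (Fin q)) (hZmeas : ∀ m, Measurable (Z m))
    (hZgauss : ∀ m i, P.map (fun ω => Z m ω i) = gaussianReal 0 1)
    (hZindep : iIndepFun
      (fun (mi : ℕ × Fin q) ω => Z mi.1 ω mi.2) P)
    (hZX₀indep : IndepFun X₀ (fun ω (mi : ℕ × Fin q) => Z mi.1 ω mi.2) P)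
    -- quantizers with pairwise distinct components, Voronoi partitions, projections:
    (x : ℕ → Fin K → EuclideanSpace ℝ (Fin d)) (hx : ∀ m, Function.Injective (x m))
    (V : ℕ → Fin K → Set (EuclideanSpace ℝ (Fin d)))
    (hVmeas : ∀ m k, MeasurableSet (V m k))
    (hVpart : ∀ m ζ, ∃! k, ζ ∈ V m k)
    (hVoronoi : ∀ m k, V m k ⊆ {y | ∀ j, dist y (x m k) ≤ dist y (x m j)})
    (proj : ℕ → EuclideanSpace ℝ (Fin d) → EuclideanSpace ℝ (Fin d))
    (hproj : ∀ m k, ∀ ζ ∈ V m k, proj m ζ = x m k) (hprojmeas : ∀ m, Measurable (proj m))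
    -- the weights `p^{(m)}_k = P(X̂_{t_m} = x^{(m)}_k)`:
    (pw : ℕ → Fin K → ℝ)
    -- the recursive quantization scheme in the Vlasov setting:
    (Xtilde Xhat : ℕ → Ω → EuclideanSpace ℝ (Fin d))
    (hXtildemeas : ∀ m, Measurable (Xtilde m))
    (hXtilde0 : Xtilde 0 = X₀)
    (hXhat : ∀ m, Xhat m = fun ω => proj m (Xtilde m ω))
    (hpw : ∀ m k, pw m k = (P {ω | Xhat m ω = x m k}).toReal)
    (hXtilde : ∀ m < M, ∀ ω, Xtilde (m + 1) ω =
      Xhat m ω + h • ∑ k, pw m k • β (m * h) (Xhat m ω) (x m k)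
        + Real.sqrt h • (∑ k, pw m k • a (m * h) (Xhat m ω) (x m k)) (Z m ω)) :
    ∀ m < M, ∀ j : Fin K,
      pw (m + 1) j =
        ∑ i : Fin K,
          (P {ω | (x m i + h • ∑ k, pw m k • β (m * h) (x m i) (x m k)
              + Real.sqrt h • (∑ k, pw m k • a (m * h) (x m i) (x m k)) (Z m ω))
            ∈ V (m + 1) j}).toReal * pw m i := by
  intro m hm j
  classical
  -- the one-step maps and the relevant events
  set g : Fin K → Ω → EuclideanSpace ℝ (Fin d) := fun i ω =>
    x m i + h • ∑ k, pw m k • β (m * h) (x m i) (x m k)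
      + Real.sqrt h • (∑ k, pw m k • a (m * h) (x m i) (x m k)) (Z m ω) with hgdef
  set W : Fin K → Set Ω := fun i => {ω | g i ω ∈ V (m + 1) j} with hWdef
  set A : Fin K → Set Ω := fun i => {ω | Xhat m ω = x m i} with hAdef
  have hrange : ∀ n ω, ∃ i, Xhat n ω = x n i := by
    intro n ω
    obtain ⟨k, hk, -⟩ := hVpart n (Xtilde n ω)
    exact ⟨k, by simp only [hXhat n]; exact hproj n k _ hk⟩
  have hgmeas : ∀ i, Measurable (g i) := by
    intro i
    rw [hgdef]
    exact meas_affine_helper m0 _ _ _ (hZmeas m)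
  have hWmeas : ∀ i, MeasurableSet (W i) := fun i => hgmeas i (hVmeas (m + 1) j)
  have hXhatm0 : Measurable (Xhat m) := by
    rw [hXhat m]; exact (hprojmeas m).comp (hXtildemeas m)
  have hAmeas : ∀ i, MeasurableSet (A i) := fun i => hXhatm0 (measurableSet_singleton _)
  -- the key independence fact, proved via the σ-algebras generated by the past and by `Z m`
  have hindep_i : ∀ i, P (W i ∩ A i) = P (W i) * P (A i) := by
    set f : ℕ × Fin q → Ω → ℝ := fun ki ω => Z ki.1 ω ki.2 with hfdef
    have hfmeas : ∀ ki : ℕ × Fin q, Measurable (f ki) :=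
      fun ki => (measurable_pi_apply ki.2).comp ((WithLp.measurable_ofLp 2 _).comp (hZmeas ki.1))
    set S : Set (ℕ × Fin q) := {ki | ki.1 = m} with hSdef
    set T' : Set (ℕ × Fin q) := {ki | ki.1 < m} with hT'def
    set G1 : MeasurableSpace Ω := ⨆ ki ∈ S, MeasurableSpace.comap (f ki) inferInstance
      with hG1def
    set F : MeasurableSpace Ω := MeasurableSpace.comap X₀ inferInstance ⊔
      ⨆ ki ∈ T', MeasurableSpace.comap (f ki) inferInstance with hFdef
    have hST : Disjoint S T' := by
      rw [Set.disjoint_left]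
      rintro ki h1 h2
      rw [hSdef, Set.mem_setOf_eq] at h1
      rw [hT'def, Set.mem_setOf_eq] at h2
      omega
    have hInd : Indep G1 F P := by
      rw [hG1def, hFdef]
      exact aux_indep (m0 := m0) P X₀ hX₀meas f hfmeas hZindep.iIndep hZX₀indep S T' hST
    have hZmF : ∀ n < m, Measurable[F] (Z n) := by
      intro n hn
      refine meas_pi_helper F fun i2 => Measurable.of_comap_le ?_
      rw [hFdef]
      refine le_trans ?_ le_sup_right
      exact le_biSup (fun ki => MeasurableSpace.comap (f ki) inferInstance)
        (show (n, i2) ∈ T' from hn)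
    have hZmG1 : Measurable[G1] (Z m) := by
      refine meas_pi_helper G1 fun i2 => Measurable.of_comap_le ?_
      rw [hG1def]
      exact le_biSup (fun ki => MeasurableSpace.comap (f ki) inferInstance)
        (show (m, i2) ∈ S from rfl)
    have hXtF : ∀ n ≤ m, Measurable[F] (Xtilde n) := by
      intro n
      induction n with
      | zero =>
        intro _
        rw [hXtilde0]
        refine Measurable.of_comap_le ?_
        rw [hFdef]
        exact le_sup_left
      | succ n ih =>
        intro hn
        have hnm : n < m := Nat.lt_of_succ_le hn
        have hnM : n < M := hnm.trans hm
        have ihn : Measurable[F] (Xtilde n) := ih hnm.le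
        have hXhatF : Measurable[F] (Xhat n) := by
          rw [hXhat n]; exact meas_comp_helper F (hprojmeas n) ihn
        have key : Xtilde (n + 1) = fun ω => ∑ i : Fin K,
            if Xhat n ω = x n i then
              x n i + h • ∑ k, pw n k • β (n * h) (x n i) (x n k)
                + Real.sqrt h • (∑ k, pw n k • a (n * h) (x n i) (x n k)) (Z n ω)
            else 0 := by
          funext ω
          obtain ⟨i, hi⟩ := hrange n ω
          have hco : ∀ i', (x n i = x n i') = (i = i') :=
            fun i' => propext ⟨fun hcc => hx n hcc, fun hcc => by rw [hcc]⟩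
          rw [hXtilde n hnM ω]
          simp only [hi, hco, Finset.sum_ite_eq, Finset.mem_univ, if_true]
        rw [key]
        exact meas_sum_ite_helper F hXhatF (x n) _
          (fun i => meas_affine_helper F _ _ _ (hZmF n hnm))
    have hXhatmF : Measurable[F] (Xhat m) := by
      rw [hXhat m]; exact meas_comp_helper F (hprojmeas m) (hXtF m le_rfl)
    have hWmeasG1 : ∀ i, MeasurableSet[G1] (W i) := by
      intro i
      rw [hWdef]
      have : Measurable[G1] (g i) := by
        rw [hgdef]
        exact meas_affine_helper G1 _ _ _ hZmG1
      exact this (hVmeas (m + 1) j)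
    have hAmeasF : ∀ i, MeasurableSet[F] (A i) := by
      intro i
      rw [hAdef]
      exact hXhatmF (measurableSet_singleton _)
    exact fun i => (Indep_iff _ _ _).1 hInd (W i) (A i) (hWmeasG1 i) (hAmeasF i)
  -- decomposition of the event `X̂_{m+1} = x^{(m+1)}_j`
  have hAB : {ω | Xhat (m + 1) ω = x (m + 1) j} = ⋃ i, W i ∩ A i := by
    ext ω
    obtain ⟨i, hi⟩ := hrange m ω
    have heq : Xtilde (m + 1) ω = g i ω := by
      rw [hXtilde m hm ω, hi, hgdef]
    simp only [hWdef, hAdef, Set.mem_setOf_eq, Set.mem_iUnion, Set.mem_inter_iff]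
    constructor
    · intro hp
      obtain ⟨k, hk, -⟩ := hVpart (m + 1) (Xtilde (m + 1) ω)
      have hpk : Xhat (m + 1) ω = x (m + 1) k := by
        simp only [hXhat (m + 1)]; exact hproj (m + 1) k _ hk
      have hkj : k = j := hx (m + 1) (hpk.symm.trans hp)
      refine ⟨i, ?_, hi⟩
      rw [← heq, ← hkj]
      exact hk
    · rintro ⟨i', hW', hA'⟩
      have hii : i' = i := hx m (hA'.symm.trans hi)
      subst hii
      have hmem : Xtilde (m + 1) ω ∈ V (m + 1) j := by rw [heq]; exact hW'
      simp only [hXhat (m + 1)]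
      exact hproj (m + 1) j _ hmem
  have hdisj : Pairwise (Function.onFun Disjoint fun i => W i ∩ A i) := by
    intro i i' hii'
    refine Set.disjoint_left.mpr ?_
    rintro ω ⟨-, h1⟩ ⟨-, h2⟩
    rw [hAdef] at h1 h2
    exact hii' (hx m ((h1 : Xhat m ω = x m i).symm.trans (h2 : Xhat m ω = x m i')))
  have hsum : P {ω | Xhat (m + 1) ω = x (m + 1) j} = ∑ i, P (W i) * P (A i) := by
    rw [hAB, measure_iUnion hdisj fun i => (hWmeas i).inter (hAmeas i), tsum_fintype]
    exact Finset.sum_congr rfl fun i _ => hindep_i i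
  calc pw (m + 1) j = (P {ω | Xhat (m + 1) ω = x (m + 1) j}).toReal := hpw (m + 1) j
    _ = (∑ i, P (W i) * P (A i)).toReal := by rw [hsum]
    _ = ∑ i, (P (W i)).toReal * (P (A i)).toReal := by
        rw [ENNReal.toReal_sum fun i _ =>
          ENNReal.mul_ne_top (measure_ne_top P _) (measure_ne_top P _)]
        exact Finset.sum_congr rfl fun i _ => ENNReal.toReal_mul
    _ = ∑ i, (P (W i)).toReal * pw m i := by
        refine Finset.sum_congr rfl fun i _ => ?_
        rw [hpw m i, hAdef]
    _ = _ := by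
        simp only [hWdef, hgdef]
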